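/- Suppose a function f : V × V → V on a finite set V satisfies the axioms of an LCA function of some rooted tree T (i.e., f(u,v) = LCA_T(u,v) for all u,v). Then the root of T equals the unique element r ∈ V with f(r,v) = r for all v, and for each non-root u, parent(u) is the ancestor-maximal element of {f(u,w) : w ∈ V, f(u,w) ≠ u}. Hence T is determined by f. -/
import Mathlib


/-- A rooted tree on a vertex set `V`: a root, a parent function fixing the
root, such that iterating the parent function from any vertex reaches the root. -/
structure RTree (V : Type) where
  root : V
  parent : V → V
  parent_root : parent root = root
  reaches_root : ∀ v : V, ∃ n : ℕ, parent^[n] v = root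

/-- `a` is an ancestor of `v` (every vertex is an ancestor of itself). -/
def RTree.isAncestor {V : Type} (T : RTree V) (a v : V) : Prop :=
  ∃ n : ℕ, T.parent^[n] v = a

/-- `a` is the least common ancestor of `u` and `v`: it is a common ancestor,
and every common ancestor of `u` and `v` is an ancestor of `a`. -/
def RTree.IsLCA {V : Type} (T : RTree V) (a u v : V) : Prop :=
  T.isAncestor a u ∧ T.isAncestor a v ∧
    ∀ b : V, T.isAncestor b u → T.isAncestor b v → T.isAncestor b a

namespace RTree

variable {V : Type} (T : RTree V)

lemma root_fixed (n : ℕ) : T.parent^[n] T.root = T.root :=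
  Function.iterate_fixed T.parent_root n

lemma cycle_eq_root {v : V} {k : ℕ} (hk : k ≠ 0) (h : T.parent^[k] v = v) :
    v = T.root := by
  obtain ⟨N, hN⟩ := T.reaches_root v
  have hmul : ∀ t, T.parent^[k * t] v = v := by
    intro t
    induction t with
    | zero => simp
    | succ t ih => rw [Nat.mul_succ, Function.iterate_add_apply, h, ih]
  have hle : N ≤ k * N := Nat.le_mul_of_pos_left N (Nat.pos_of_ne_zero hk)
  calc v = T.parent^[k * N] v := (hmul N).symm
    _ = T.parent^[k * N - N] (T.parent^[N] v) := by
        rw [← Function.iterate_add_apply, Nat.sub_add_cancel hle]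
    _ = T.root := by rw [hN, root_fixed]

lemma anc_antisymm {a b : V} (h1 : T.isAncestor a b) (h2 : T.isAncestor b a) :
    a = b := by
  obtain ⟨n, hn⟩ := h1
  obtain ⟨m, hm⟩ := h2
  rcases Nat.eq_zero_or_pos n with h | h
  · subst h; exact hn.symm
  · have hc : T.parent^[n + m] a = a := by
      rw [Function.iterate_add_apply, hm, hn]
    have hc2 : T.parent^[m + n] b = b := by
      rw [Function.iterate_add_apply, hn, hm]
    rw [T.cycle_eq_root (by omega) hc, T.cycle_eq_root (by omega) hc2]

lemma lca_unique {a b u v : V} (ha : T.IsLCA a u v) (hb : T.IsLCA b u v) : a = b :=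
  T.anc_antisymm (hb.2.2 a ha.1 ha.2.1) (ha.2.2 b hb.1 hb.2.1)

lemma anc_iff {f : V → V → V} (hf : ∀ u v, T.IsLCA (f u v) u v) (a v : V) :
    T.isAncestor a v ↔ f a v = a := by
  constructor
  · intro h
    exact T.lca_unique (hf a v) ⟨⟨0, rfl⟩, h, fun b hb _ => hb⟩
  · intro h
    have := (hf a v).2.1
    rwa [h] at this

lemma parent_ne {u : V} (hu : u ≠ T.root) : T.parent u ≠ u := by
  intro h
  obtain ⟨n, hn⟩ := T.reaches_root u
  rw [Function.iterate_fixed h] at hn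
  exact hu hn

lemma f_parent {f : V → V → V} (hf : ∀ u v, T.IsLCA (f u v) u v) (u : V) :
    f u (T.parent u) = T.parent u :=
  T.lca_unique (hf u (T.parent u)) ⟨⟨1, rfl⟩, ⟨0, rfl⟩, fun _ _ h2 => h2⟩

lemma anc_of_f_ne {f : V → V → V} (hf : ∀ u v, T.IsLCA (f u v) u v)
    {u x : V} (w : V) (hx : f u w = x) (hne : x ≠ u) :
    T.isAncestor x (T.parent u) := by
  obtain ⟨n, hn⟩ := (hf u w).1
  rw [hx] at hn
  cases n with
  | zero => simp at hn; exact absurd hn.symm hne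
  | succ m => exact ⟨m, by rw [← Function.iterate_succ_apply]; exact hn⟩

lemma f_root {f : V → V → V} (hf : ∀ u v, T.IsLCA (f u v) u v) (v : V) :
    f T.root v = T.root :=
  T.lca_unique (hf T.root v) ⟨⟨0, rfl⟩, T.reaches_root v, fun _ hb _ => hb⟩

end RTree

/-- If `f` is the LCA function of a rooted tree `T`, then the root of `T` is
the unique element `r` with `f r v = r` for all `v`, and for each non-root
`u`, `parent u` is the ancestor-maximal element of
`{f u w : w ∈ V, f u w ≠ u}`.  Hence `T` is determined by `f`. -/
theorem tree_determined_by_lca {V : Type} [Fintype V] (T : RTree V)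
    (f : V → V → V) (hf : ∀ u v : V, T.IsLCA (f u v) u v) :
    ((∀ v : V, f T.root v = T.root) ∧
        ∀ r : V, (∀ v : V, f r v = r) → r = T.root) ∧
      (∀ u : V, u ≠ T.root →
        (∃ w : V, f u w = T.parent u ∧ f u w ≠ u) ∧
          ∀ x : V, (∃ w : V, f u w = x ∧ x ≠ u) →
            T.isAncestor x (T.parent u)) ∧
      ∀ T' : RTree V, (∀ u v : V, T'.IsLCA (f u v) u v) →
        T'.root = T.root ∧ T'.parent = T.parent := by
  refine ⟨⟨T.f_root hf, ?_⟩, ?_, ?_⟩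
  · intro r hr
    have h := (T.anc_iff hf r T.root).mpr (hr T.root)
    exact T.anc_antisymm h (T.reaches_root r)
  · intro u hu
    refine ⟨⟨T.parent u, T.f_parent hf u, by
      rw [T.f_parent hf u]; exact T.parent_ne hu⟩, ?_⟩
    rintro x ⟨w, hw, hne⟩
    exact T.anc_of_f_ne hf w hw hne
  · intro T' hf'
    have hroot : T'.root = T.root := by
      have h := (T.anc_iff hf T'.root T.root).mpr (T'.f_root hf' T.root)
      exact T.anc_antisymm h (T.reaches_root T'.root)
    refine ⟨hroot, funext fun u => ?_⟩
    by_cases hu : u = T.root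
    · subst hu
      rw [← hroot, T'.parent_root, hroot, T.parent_root]
    · have hu' : u ≠ T'.root := by rw [hroot]; exact hu
      have h1 : T'.isAncestor (T.parent u) (T'.parent u) :=
        T'.anc_of_f_ne hf' (T.parent u) (T.f_parent hf u) (T.parent_ne hu)
      have h2 : T.isAncestor (T'.parent u) (T.parent u) :=
        T.anc_of_f_ne hf (T'.parent u) (T'.f_parent hf' u) (T'.parent_ne hu')
      have h1' : T.isAncestor (T.parent u) (T'.parent u) :=
        (T.anc_iff hf _ _).mpr ((T'.anc_iff hf' _ _).mp h1)
      exact (T.anc_antisymm h1' h2).symm
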